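/- For every m with 1 ≤ m ≤ n, there exists a nonempty subset S of vertices of the odd cycle C_{2n+1} such that |C_S(C_{2n+1})| = m. -/

import Mathlib

open SimpleGraph Finset
open scoped Fin.NatCast Fin.CommRing

/-- The `S`-eccentricity of a vertex `v`. -/
noncomputable def sEcc {V : Type*} (G : SimpleGraph V) (S : Finset V) (v : V) : ℕ :=
  S.sup fun x => G.dist v x

/-- The `S`-center of `G`. -/
noncomputable def sCenter {V : Type*} (G : SimpleGraph V) (S : Finset V) : Set V :=
  {v | ∀ w, sEcc G S v ≤ sEcc G S w}

/-- `A` is a center set of `G` if it is the `S`-center for some nonempty set `S`. -/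
def IsCenterSet {V : Type*} (G : SimpleGraph V) (A : Set V) : Prop :=
  ∃ S : Finset V, S.Nonempty ∧ sCenter G S = A

section aux

variable {n m : ℕ}

private lemma val_one_cyc (hn : 1 ≤ n) : (1 : Fin (2*n+1)).val = 1 := by
  rw [Fin.val_one', Nat.mod_eq_of_lt (by omega)]

private lemma cyc_adj (hn : 1 ≤ n) {u v : Fin (2*n+1)} :
    (cycleGraph (2*n+1)).Adj u v ↔ u - v = 1 ∨ v - u = 1 := by
  rw [SimpleGraph.cycleGraph_adj']
  have h1 : (1 : Fin (2*n+1)).val = 1 := val_one_cyc hn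
  constructor
  · rintro (h | h)
    · left; exact Fin.ext (by rw [h1, h])
    · right; exact Fin.ext (by rw [h1, h])
  · rintro (h | h)
    · left; rw [h, h1]
    · right; rw [h, h1]

private lemma walk_ab (hn : 1 ≤ n) {u v : Fin (2*n+1)}
    (p : (cycleGraph (2*n+1)).Walk u v) :
    ∃ a b : ℕ, a + b = p.length ∧ v - u = (a : Fin (2*n+1)) - (b : Fin (2*n+1)) := by
  induction p with
  | nil => exact ⟨0, 0, rfl, by simp⟩
  | @cons u w v h q ih =>
    obtain ⟨a, b, hab, hd⟩ := ih
    rcases (cyc_adj hn).1 h with h1 | h1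
    · refine ⟨a, b + 1, by simpa using by omega, ?_⟩
      have hw : w = u - 1 := by rw [← h1]; ring
      push_cast
      rw [hw] at hd
      have : v - u = (v - (u - 1)) - 1 := by ring
      rw [this, hd]; ring
    · refine ⟨a + 1, b, by simpa using by omega, ?_⟩
      have hw : w = u + 1 := by rw [← h1]; ring
      push_cast
      rw [hw] at hd
      have : v - u = (v - (u + 1)) + 1 := by ring
      rw [this, hd]; ring

private lemma dist_add_cast (hn : 1 ≤ n) (u : Fin (2*n+1)) (k : ℕ) :
    (cycleGraph (2*n+1)).dist u (u + (k : Fin (2*n+1))) ≤ k := by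
  induction k with
  | zero => simp
  | succ k ih =>
    have hadj : (cycleGraph (2*n+1)).Adj (u + (k : Fin (2*n+1)))
        (u + (k : Fin (2*n+1)) + 1) := by
      rw [cyc_adj hn]; right; ring
    have htri := (SimpleGraph.cycleGraph_connected (n := 2*n)).dist_triangle
      (u := u) (v := u + (k : Fin (2*n+1))) (w := u + (k : Fin (2*n+1)) + 1)
    have hle : (cycleGraph (2*n+1)).dist (u + (k : Fin (2*n+1)))
        (u + (k : Fin (2*n+1)) + 1) ≤ 1 := by
      simpa using SimpleGraph.dist_le hadj.toWalk
    have hcast : ((k + 1 : ℕ) : Fin (2*n+1)) = (k : Fin (2*n+1)) + 1 := by push_cast; ring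
    rw [hcast, ← add_assoc]
    omega

private lemma cyc_dist (hn : 1 ≤ n) (u v : Fin (2*n+1)) :
    (cycleGraph (2*n+1)).dist u v = min (v - u).val (u - v).val := by
  have hup : ∀ x y : Fin (2*n+1), (cycleGraph (2*n+1)).dist x y ≤ (y - x).val := by
    intro x y
    have := dist_add_cast hn x (y - x).val
    rwa [Fin.cast_val_eq_self, add_sub_cancel] at this
  refine le_antisymm (le_min (hup u v) ?_) ?_
  · rw [SimpleGraph.dist_comm]; exact hup v u
  · obtain ⟨p, hp⟩ := (SimpleGraph.cycleGraph_connected (n := 2*n)).exists_walk_length_eq_dist u v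
    obtain ⟨a, b, hab, hd⟩ := walk_ab hn p
    rw [hp] at hab
    rcases le_total b a with hba | hba
    · have : v - u = ((a - b : ℕ) : Fin (2*n+1)) := by
        rw [hd]; push_cast [hba]; ring
      have hval : (v - u).val = (a - b) % (2*n+1) := by rw [this, Fin.val_natCast]
      have := Nat.mod_le (a - b) (2*n+1)
      omega
    · have : u - v = ((b - a : ℕ) : Fin (2*n+1)) := by
        have : u - v = -(v - u) := by ring
        rw [this, hd]; push_cast [hba]; ring
      have hval : (u - v).val = (b - a) % (2*n+1) := by rw [this, Fin.val_natCast]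
      have := Nat.mod_le (b - a) (2*n+1)
      omega

/-- the chosen set -/
private def SF (n m : ℕ) : Finset (Fin (2*n+1)) :=
  univ.filter (fun v => 2*m ≤ v.val ∨ v.val % 4 = 3)

private lemma mem_SF {v : Fin (2*n+1)} : v ∈ SF n m ↔ 2*m ≤ v.val ∨ v.val % 4 = 3 := by
  simp [SF]

private lemma sub_val_add (hn : 1 ≤ n) (u v : Fin (2*n+1)) :
    (v - u).val + (u - v).val = 0 ∨ (v - u).val + (u - v).val = 2*n+1 := by
  have h : (v - u) + (u - v) = 0 := by ring
  have h2 : ((v - u).val + (u - v).val) % (2*n+1) = 0 := by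
    rw [← Fin.val_add, h]; rfl
  obtain ⟨c, hc⟩ := Nat.dvd_of_mod_eq_zero h2
  have h3 := (v - u).is_lt
  have h4 := (u - v).is_lt
  have hc2 : c ≤ 1 := by nlinarith
  interval_cases c <;> omega

private lemma val_add_one {w : Fin (2*n+1)} (hn : 1 ≤ n) (h : w.val < 2*n) :
    (w + 1).val = w.val + 1 := by
  rw [Fin.val_add, val_one_cyc hn, Nat.mod_eq_of_lt (by omega)]

private lemma cnt : ∀ k : ℕ, ((Finset.range (2*k+1)).filter (fun j => j % 4 < 2)).card = k + 1 := by
  intro k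
  induction k with
  | zero => decide
  | succ k ih =>
    have he : 2*(k+1)+1 = (2*k+1) + 1 + 1 := by ring
    rw [he, Finset.range_add_one, Finset.range_add_one, Finset.filter_insert, Finset.filter_insert]
    have hodd : (2*k+1) % 4 = 1 ∨ (2*k+1) % 4 = 3 := by omega
    have hnm1 : (2*k+1) ∉ (Finset.range (2*k+1)).filter (fun j => j % 4 < 2) := by
      simp
    rcases hodd with h1 | h1
    · have h2 : (2*k+1+1) % 4 = 2 := by omega
      rw [if_neg (by omega), if_pos (by omega), Finset.card_insert_of_notMem hnm1, ih]
    · have h2 : (2*k+1+1) % 4 = 0 := by omega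
      rw [if_pos (by omega), if_neg (by omega)]
      rcases Nat.lt_or_ge ((2*k+1)%4) 2 with h3 | h3
      · omega
      · rw [Finset.card_insert_of_notMem (by simp), ih]

private lemma CF_card (hm : 1 ≤ m) (hmn : m ≤ n) :
    (univ.filter (fun w : Fin (2*n+1) => w ∉ SF n m ∧ w + 1 ∉ SF n m)).card = m := by
  have hn : 1 ≤ n := le_trans hm hmn
  rw [Finset.card_bij' (i := fun (w : Fin (2*n+1)) _ => w.val)
    (j := fun (j : ℕ) hj => (⟨j, by simp only [Finset.mem_filter, Finset.mem_range] at hj; omega⟩ : Fin (2*n+1)))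
    (t := (Finset.range (2*(m-1)+1)).filter (fun j => j % 4 < 2))
    ?_ ?_ ?_ ?_]
  · rw [cnt]; omega
  · intro w hw
    simp only [Finset.mem_filter, Finset.mem_univ, true_and, mem_SF] at hw
    obtain ⟨hw1, hw2⟩ := hw
    push_neg at hw1 hw2
    have hlt : w.val < 2*n := by omega
    rw [val_add_one hn hlt] at hw2
    simp only [Finset.mem_filter, Finset.mem_range]
    omega
  · intro j hj
    simp only [Finset.mem_filter, Finset.mem_range] at hj
    simp only [Finset.mem_filter, Finset.mem_univ, true_and, mem_SF, Fin.val_mk]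
    have hlt : j < 2*n := by omega
    constructor
    · push_neg; exact ⟨by omega, by omega⟩
    · rw [val_add_one hn (by simpa using hlt), Fin.val_mk]
      push_neg
      exact ⟨by omega, by omega⟩
  · intro w hw; exact Fin.ext rfl
  · intro j hj; rfl

private lemma SF_nonempty (hmn : m ≤ n) : (⟨2*n, by omega⟩ : Fin (2*n+1)) ∈ SF n m := by
  rw [mem_SF]; left; simp; omega

private lemma dist_le_n (hn : 1 ≤ n) (v x : Fin (2*n+1)) :
    (cycleGraph (2*n+1)).dist v x ≤ n := by
  rw [cyc_dist hn]
  rcases sub_val_add hn v x with h | h <;> omega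

private lemma eq_add_iff_val {v x : Fin (2*n+1)} {c : ℕ} (hc : c < 2*n+1) :
    x = v + (c : Fin (2*n+1)) ↔ (x - v).val = c := by
  constructor
  · intro h
    have : x - v = (c : Fin (2*n+1)) := by rw [h]; ring
    rw [this, Fin.val_natCast, Nat.mod_eq_of_lt hc]
  · intro h
    have : x - v = (c : Fin (2*n+1)) := by
      apply Fin.ext
      rw [h, Fin.val_natCast, Nat.mod_eq_of_lt hc]
    have h2 : x = v + (x - v) := by ring
    rw [h2, this]

private lemma dist_eq_n_iff (hn : 1 ≤ n) (v x : Fin (2*n+1)) :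
    (cycleGraph (2*n+1)).dist v x = n ↔
      x = v + (n : Fin (2*n+1)) ∨ x = v + (n : Fin (2*n+1)) + 1 := by
  have hx1 : v + (n : Fin (2*n+1)) + 1 = v + ((n+1 : ℕ) : Fin (2*n+1)) := by push_cast; ring
  rw [hx1, eq_add_iff_val (by omega), eq_add_iff_val (by omega), cyc_dist hn]
  rcases sub_val_add hn v x with h | h <;> omega

private lemma dist_ge_sub (hn : 1 ≤ n) {v x : Fin (2*n+1)}
    (h1 : n - 1 ≤ (x - v).val) (h2 : (x - v).val ≤ n + 2) :
    n - 1 ≤ (cycleGraph (2*n+1)).dist v x := by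
  rw [cyc_dist hn]
  rcases sub_val_add hn v x with h | h <;> omega

private lemma window (hmn : m ≤ n) (hn2 : 2 ≤ n) (v : Fin (2*n+1)) :
    ∃ x ∈ SF n m, n - 1 ≤ (x - v).val ∧ (x - v).val ≤ n + 2 := by
  set W : ℕ := (v.val + (n-1)) % (2*n+1) with hW
  have hWlt : W < 2*n+1 := Nat.mod_lt _ (by omega)
  obtain ⟨j, hj3, hjS⟩ : ∃ j, j ≤ 3 ∧ ((W + j) % (2*n+1) ≥ 2*m ∨ (W + j) % (2*n+1) % 4 = 3) := by
    rcases le_or_gt (W + 3) (2*n) with hA | hB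
    · refine ⟨3 - W % 4, by omega, Or.inr ?_⟩
      rw [Nat.mod_eq_of_lt (show W + (3 - W % 4) < 2*n+1 by omega)]
      omega
    · refine ⟨2*n - W, by omega, Or.inl ?_⟩
      rw [show W + (2*n - W) = 2*n by omega, Nat.mod_eq_of_lt (by omega)]
      omega
  refine ⟨v + ((n - 1 + j : ℕ) : Fin (2*n+1)), ?_, ?_, ?_⟩
  · rw [mem_SF]
    have hval : (v + ((n - 1 + j : ℕ) : Fin (2*n+1))).val = (W + j) % (2*n+1) := by
      rw [Fin.val_add, Fin.val_natCast, Nat.mod_eq_of_lt (show n-1+j < 2*n+1 by omega),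
        hW, Nat.mod_add_mod, add_assoc]
    rw [hval]
    rcases hjS with h | h
    · left; omega
    · right; omega
  · have : (v + ((n - 1 + j : ℕ) : Fin (2*n+1))) - v = ((n - 1 + j : ℕ) : Fin (2*n+1)) := by ring
    rw [this, Fin.val_natCast, Nat.mod_eq_of_lt (by omega)]
    omega
  · have : (v + ((n - 1 + j : ℕ) : Fin (2*n+1))) - v = ((n - 1 + j : ℕ) : Fin (2*n+1)) := by ring
    rw [this, Fin.val_natCast, Nat.mod_eq_of_lt (by omega)]
    omega

private lemma ecc_le (hn : 1 ≤ n) (v : Fin (2*n+1)) :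
    sEcc (cycleGraph (2*n+1)) (SF n m) v ≤ n :=
  Finset.sup_le fun x _ => dist_le_n hn v x

private lemma ecc_lower (hm : 1 ≤ m) (hmn : m ≤ n) (v : Fin (2*n+1)) :
    n - 1 ≤ sEcc (cycleGraph (2*n+1)) (SF n m) v := by
  rcases le_or_gt 2 n with h2 | h2
  · obtain ⟨x, hx, h1, hb⟩ := window hmn h2 v
    calc n - 1 ≤ (cycleGraph (2*n+1)).dist v x := dist_ge_sub (by omega) h1 hb
    _ ≤ _ := Finset.le_sup hx
  · have hn1 : n = 1 := by omega
    subst hn1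
    simp

private lemma ecc_eq_n_iff (hm : 1 ≤ m) (hmn : m ≤ n) (v : Fin (2*n+1)) :
    sEcc (cycleGraph (2*n+1)) (SF n m) v = n ↔
      v + (n : Fin (2*n+1)) ∈ SF n m ∨ v + (n : Fin (2*n+1)) + 1 ∈ SF n m := by
  have hn : 1 ≤ n := le_trans hm hmn
  constructor
  · intro h
    obtain ⟨x, hx, hs⟩ := Finset.exists_mem_eq_sup (SF n m) ⟨_, SF_nonempty hmn⟩
      (fun x => (cycleGraph (2*n+1)).dist v x)
    have hd : (cycleGraph (2*n+1)).dist v x = n := by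
      rw [← hs]; exact h
    rcases (dist_eq_n_iff hn v x).1 hd with h | h
    · left; rw [← h]; exact hx
    · right; rw [← h]; exact hx
  · rintro (h | h)
    · refine le_antisymm (ecc_le hn v) ?_
      have hd : (cycleGraph (2*n+1)).dist v (v + (n : Fin (2*n+1))) = n :=
        (dist_eq_n_iff hn v _).2 (Or.inl rfl)
      calc n = _ := hd.symm
      _ ≤ _ := Finset.le_sup h
    · refine le_antisymm (ecc_le hn v) ?_
      have hd : (cycleGraph (2*n+1)).dist v (v + (n : Fin (2*n+1)) + 1) = n :=
        (dist_eq_n_iff hn v _).2 (Or.inr rfl)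
      calc n = _ := hd.symm
      _ ≤ _ := Finset.le_sup h

end aux

/-- For every `m` with `1 ≤ m ≤ n` there is a nonempty set `S` of vertices of the odd
cycle `C_{2n+1}` whose `S`-center has exactly `m` vertices. -/
theorem exists_centerSet_card_oddCycle (n m : ℕ) (hm : 1 ≤ m) (hmn : m ≤ n) :
    ∃ S : Finset (Fin (2 * n + 1)), S.Nonempty ∧
      (sCenter (SimpleGraph.cycleGraph (2 * n + 1)) S).ncard = m := by
  have hn : 1 ≤ n := le_trans hm hmn
  refine ⟨SF n m, ⟨_, SF_nonempty hmn⟩, ?_⟩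
  set centerF : Finset (Fin (2*n+1)) :=
    univ.filter (fun v => v + (n : Fin (2*n+1)) ∉ SF n m ∧ v + (n : Fin (2*n+1)) + 1 ∉ SF n m)
    with hcenterF
  have hcc : centerF.card = m := by
    rw [hcenterF, Finset.card_bij' (i := fun (v : Fin (2*n+1)) _ => v + (n : Fin (2*n+1)))
      (j := fun (w : Fin (2*n+1)) _ => w - (n : Fin (2*n+1)))
      (t := univ.filter (fun w : Fin (2*n+1) => w ∉ SF n m ∧ w + 1 ∉ SF n m))
      ?_ ?_ ?_ ?_]
    · exact CF_card hm hmn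
    · intro v hv
      simp only [Finset.mem_filter, Finset.mem_univ, true_and] at hv ⊢
      exact hv
    · intro w hw
      simp only [Finset.mem_filter, Finset.mem_univ, true_and] at hw ⊢
      have hq : w - (n : Fin (2*n+1)) + (n : Fin (2*n+1)) = w := by ring
      rw [hq]
      exact hw
    · intro v hv; ring
    · intro w hw; ring
  have hkey : ∀ v : Fin (2*n+1),
      v ∈ centerF ↔ sEcc (cycleGraph (2*n+1)) (SF n m) v = n - 1 := by
    intro v
    have hub := ecc_le (m := m) hn v
    have hlb := ecc_lower hm hmn v
    have hiff := ecc_eq_n_iff hm hmn v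
    rw [hcenterF]
    simp only [Finset.mem_filter, Finset.mem_univ, true_and]
    constructor
    · rintro ⟨h1, h2⟩
      have hne : sEcc (cycleGraph (2*n+1)) (SF n m) v ≠ n := by
        intro h
        rcases hiff.1 h with h | h
        · exact h1 h
        · exact h2 h
      omega
    · intro h
      have hne : sEcc (cycleGraph (2*n+1)) (SF n m) v ≠ n := by omega
      have := mt hiff.2 hne
      push_neg at this
      exact this
  have hne : centerF.Nonempty := Finset.card_pos.mp (by omega)
  obtain ⟨v₀, hv₀⟩ := hne
  have hcen : sCenter (cycleGraph (2*n+1)) (SF n m) = ↑centerF := by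
    ext v
    constructor
    · intro hv
      have hv' : ∀ w, sEcc (cycleGraph (2*n+1)) (SF n m) v ≤
          sEcc (cycleGraph (2*n+1)) (SF n m) w := hv
      have h0 := (hkey v₀).1 hv₀
      have h1 := hv' v₀
      have hlb := ecc_lower hm hmn v
      rw [Finset.mem_coe, hkey]
      omega
    · intro hv w
      rw [Finset.mem_coe, hkey] at hv
      have := ecc_lower hm hmn w
      rw [hv]
      omega
  rw [show (2 * n + 1) = 2*n+1 from rfl] at *
  rw [hcen, Set.ncard_coe_finset, hcc]
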